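/- Let f : ℝⁿ → ℝ be m-strongly convex and C², with ∇²f Lipschitz continuous with constant L₂, let g be proper closed convex, x* the unique minimizer of F = f+g, D = ∇²f(x) (assumed diagonal, i.e., f is separable), and y = prox_g^{D}(x − D⁻¹∇f(x)) where D = ∇²f(x). Then ‖y − x*‖₂ ≤ (L₂/(2m))‖x − x*‖₂². -/

import Mathlib

open scoped RealInnerProductSpace

/-- Reinterpret a plain vector as an element of Euclidean space. -/
noncomputable def toE {n : ℕ} (v : Fin n → ℝ) : EuclideanSpace ℝ (Fin n) :=
  (WithLp.equiv 2 _).symm v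

/-- The squared scaled norm `‖z‖²_H = zᵀHz`. -/
noncomputable def qnorm {n : ℕ} (H : Matrix (Fin n) (Fin n) ℝ)
    (z : EuclideanSpace ℝ (Fin n)) : ℝ :=
  dotProduct (fun i => z i) (H.mulVec (fun i => z i))

/-- `xp` is a point of the scaled proximal mapping `prox_g^H(u)`, i.e. a minimizer of
`y ↦ g(y) + (1/2)‖y − u‖²_H`. -/
def IsProxPt {n : ℕ} (g : EuclideanSpace ℝ (Fin n) → EReal)
    (H : Matrix (Fin n) (Fin n) ℝ) (u xp : EuclideanSpace ℝ (Fin n)) : Prop :=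
  ∀ y, g xp + (((1:ℝ)/2 * qnorm H (xp - u) : ℝ) : EReal)
      ≤ g y + (((1:ℝ)/2 * qnorm H (y - u) : ℝ) : EReal)

/-- The `i`-th diagonal entry of the Hessian of `f` at `x`. -/
noncomputable def hessDiag {n : ℕ} (f : EuclideanSpace ℝ (Fin n) → ℝ)
    (x : EuclideanSpace ℝ (Fin n)) (i : Fin n) : ℝ :=
  ⟪fderiv ℝ (gradient f) x (EuclideanSpace.single i (1 : ℝ)),
    EuclideanSpace.single i (1 : ℝ)⟫

open Filter Set Topology

section Aux

lemma aux_nonneg {A B : ℝ} (hB : 0 ≤ B) (h : ∀ t : ℝ, 0 < t → t ≤ 1 → 0 ≤ A + t * B) :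
    0 ≤ A := by
  by_contra h'
  push_neg at h'
  have hB1 : (0:ℝ) < 2 * (B + 1) := by linarith
  set t := min 1 ((-A) / (2 * (B + 1))) with htdef
  have ht1 : t ≤ 1 := min_le_left _ _
  have htA : t ≤ (-A) / (2 * (B + 1)) := min_le_right _ _
  have ht0 : 0 < t := lt_min (by norm_num) (div_pos (by linarith) hB1)
  have h1 := h t ht0 ht1
  have h2 : t * B ≤ ((-A) / (2 * (B + 1))) * B :=
    mul_le_mul_of_nonneg_right htA hB
  have h3 : ((-A) / (2 * (B + 1))) * B < -A := by
    rw [div_mul_eq_mul_div, div_lt_iff₀ hB1]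
    nlinarith
  linarith

lemma aux_dir {E : Type*} [NormedAddCommGroup E] [NormedSpace ℝ E] {F : Type*}
    [NormedAddCommGroup F] [NormedSpace ℝ F]
    (z v : E) {f : E → F} (hf : DifferentiableAt ℝ f z) :
    HasDerivAt (fun t : ℝ => f (z + t • v)) (fderiv ℝ f z v) 0 := by
  have h1 : HasDerivAt (fun t : ℝ => z + t • v) v 0 := by
    simpa using ((hasDerivAt_id (0:ℝ)).smul_const v).const_add z
  have h2 : HasFDerivAt f (fderiv ℝ f z) (z + (0:ℝ) • v) := by
    simpa using hf.hasFDerivAt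
  exact h2.comp_hasDerivAt 0 h1

lemma aux_small : Set.Ioc (0:ℝ) 1 ∈ 𝓝[>] (0:ℝ) :=
  Ioc_mem_nhdsGT_of_mem (by constructor <;> norm_num)

lemma aux_ge_of_slope {φ : ℝ → ℝ} {c A : ℝ} (hφ : HasDerivAt φ c 0)
    (h : ∀ᶠ t in 𝓝[>] (0:ℝ), A ≤ (φ t - φ 0) / (t - 0)) : A ≤ c := by
  have h1 : Tendsto (slope φ 0) (𝓝[>] (0:ℝ)) (𝓝 c) :=
    (hasDerivAt_iff_tendsto_slope.mp hφ).mono_left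
      (nhdsWithin_mono 0 (fun t ht => ne_of_gt ht))
  refine ge_of_tendsto h1 ?_
  filter_upwards [h] with t ht
  simpa [slope_def_field] using ht

lemma qnorm_diagonal {n : ℕ} (d : Fin n → ℝ) (z : EuclideanSpace ℝ (Fin n)) :
    qnorm (Matrix.diagonal d) z = ∑ i, d i * z i * z i := by
  unfold qnorm dotProduct
  refine Finset.sum_congr rfl (fun i _ => ?_)
  rw [Matrix.mulVec_diagonal]
  ring

end Aux

set_option maxHeartbeats 2000000 in
/-- for separable, `m`-strongly convex C² `f` with `L₂`-Lipschitz Hessian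
and convex `g`, the full proximal Newton step `y = prox_g^{D}(x − D⁻¹∇f(x))`,
`D = ∇²f(x)` (diagonal by separability), satisfies `‖y−x*‖ ≤ (L₂/(2m))‖x−x*‖²`. -/
theorem stmt12 {n : ℕ} (f : EuclideanSpace ℝ (Fin n) → ℝ)
    (fi : Fin n → ℝ → ℝ)
    (g : EuclideanSpace ℝ (Fin n) → EReal)
    (m L₂ : ℝ) (x y xstar : EuclideanSpace ℝ (Fin n))
    (hf : ContDiff ℝ 2 f)
    (hsep : ∀ z : EuclideanSpace ℝ (Fin n), f z = ∑ i, fi i (z i))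
    (hm : 0 < m)
    (hsc : ∀ (z w : EuclideanSpace ℝ (Fin n)) (lam : ℝ), lam ∈ Set.Icc (0:ℝ) 1 →
      f (lam • z + (1 - lam) • w) ≤
        lam * f z + (1 - lam) * f w - m / 2 * lam * (1 - lam) * ‖z - w‖ ^ 2)
    (hhess : ∀ (z w v : EuclideanSpace ℝ (Fin n)),
      ‖fderiv ℝ (gradient f) z v - fderiv ℝ (gradient f) w v‖ ≤ L₂ * ‖z - w‖ * ‖v‖)
    (hg_proper : ∃ z, g z ≠ ⊤) (hg_nebot : ∀ z, g z ≠ ⊥)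
    (hg_closed : LowerSemicontinuous g)
    (hg_convex : ∀ (z w : EuclideanSpace ℝ (Fin n)) (a b : ℝ), 0 ≤ a → 0 ≤ b →
      a + b = 1 → g (a • z + b • w) ≤ (a : EReal) * g z + (b : EReal) * g w)
    (hopt : ∀ z, (f xstar : EReal) + g xstar ≤ (f z : EReal) + g z)
    (huniq : ∀ z : EuclideanSpace ℝ (Fin n),
      (∀ w, (f z : EReal) + g z ≤ (f w : EReal) + g w) → z = xstar)
    (hy : IsProxPt g (Matrix.diagonal (hessDiag f x))
      (x - toE ((Matrix.diagonal (hessDiag f x))⁻¹.mulVec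
        fun i => gradient f x i)) y) :
    ‖y - xstar‖ ≤ L₂ / (2 * m) * ‖x - xstar‖ ^ 2 := by
  have hdiff : Differentiable ℝ f := hf.differentiable (by norm_num)
  have hgradC : ContDiff ℝ 1 (gradient f) :=
    ((InnerProductSpace.toDual ℝ _).symm.contDiff).comp (hf.fderiv_right (by norm_num))
  have hgd : Differentiable ℝ (gradient f) := hgradC.differentiable (by norm_num)
  set dd : Fin n → ℝ := hessDiag f x with hdd
  set u : EuclideanSpace ℝ (Fin n) :=
    x - toE ((Matrix.diagonal dd)⁻¹.mulVec fun i => gradient f x i) with hudef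
  -- inner product as a sum
  have hinner : ∀ a b : EuclideanSpace ℝ (Fin n), ⟪a, b⟫ = ∑ i, a i * b i := by
    intro a b
    simp [PiLp.inner_apply, RCLike.inner_apply, conj_trivial]
    exact Finset.sum_congr rfl (fun i _ => mul_comm _ _)
  -- first-order strong convexity
  have hgrad1 : ∀ z w, ⟪gradient f w, z - w⟫ ≤ f z - f w - m/2 * ‖z - w‖^2 := by
    intro z w
    have hgi : fderiv ℝ f w (z - w) = ⟪gradient f w, z - w⟫ := by
      rw [(hdiff w).hasGradientAt.hasFDerivAt.fderiv, InnerProductSpace.toDual_apply_apply]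
    rw [← hgi]
    have hD : HasDerivAt (fun t : ℝ => f (w + t • (z - w))) (fderiv ℝ f w (z - w)) 0 :=
      aux_dir w (z - w) (hdiff w)
    have h1 : Tendsto (slope (fun t : ℝ => f (w + t • (z - w))) 0) (𝓝[>] (0:ℝ))
        (𝓝 (fderiv ℝ f w (z - w))) :=
      (hasDerivAt_iff_tendsto_slope.mp hD).mono_left
        (nhdsWithin_mono 0 (fun t ht => ne_of_gt ht))
    have h2 : Tendsto (fun t : ℝ => f z - f w - m/2 * (1 - t) * ‖z - w‖^2) (𝓝[>] (0:ℝ))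
        (𝓝 (f z - f w - m/2 * ‖z - w‖^2)) := by
      have : ContinuousAt (fun t : ℝ => f z - f w - m/2 * (1 - t) * ‖z - w‖^2) 0 := by
        fun_prop
      simpa using this.continuousWithinAt.tendsto
    refine le_of_tendsto_of_tendsto h1 h2 ?_
    filter_upwards [aux_small] with t ht
    have key := hsc z w t ⟨le_of_lt ht.1, ht.2⟩
    have heq : t • z + (1 - t) • w = w + t • (z - w) := by module
    rw [heq] at key
    have ht0 : (0:ℝ) < t := ht.1
    simp only [slope_def_field, sub_zero, zero_smul, add_zero]
    rw [div_le_iff₀ ht0]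
    nlinarith [key]
  -- strong monotonicity of the gradient
  have hmono : ∀ z w, m * ‖z - w‖^2 ≤ ⟪gradient f z - gradient f w, z - w⟫ := by
    intro z w
    have h1 := hgrad1 z w
    have h2 := hgrad1 w z
    have e1 : ⟪gradient f z, w - z⟫ = -⟪gradient f z, z - w⟫ := by
      rw [show w - z = -(z - w) from (neg_sub z w).symm, inner_neg_right]
    have e2 : ‖w - z‖ = ‖z - w‖ := norm_sub_rev w z
    rw [e1, e2] at h2
    rw [inner_sub_left]
    linarith
  -- diagonal Hessian entries are at least m
  have hdm : ∀ i, m ≤ dd i := by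
    intro i
    set e : EuclideanSpace ℝ (Fin n) := EuclideanSpace.single i (1:ℝ) with he
    have hc : HasDerivAt (fun t : ℝ => gradient f (x + t • e))
        (fderiv ℝ (gradient f) x e) 0 := aux_dir x e (hgd x)
    have hψ : HasDerivAt (fun t : ℝ => ⟪e, gradient f (x + t • e) - gradient f x⟫)
        ⟪e, fderiv ℝ (gradient f) x e⟫ 0 := by
      have h3 := (hc.sub_const (gradient f x))
      simpa [Function.comp_def] using ((innerSL ℝ e).hasFDerivAt).comp_hasDerivAt 0 h3
    have hkey : m ≤ ⟪e, fderiv ℝ (gradient f) x e⟫ := by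
      refine aux_ge_of_slope hψ ?_
      filter_upwards [aux_small] with t ht
      have hmo := hmono (x + t • e) x
      have hsim : x + t • e - x = t • e := by abel
      rw [hsim] at hmo
      have hne : ‖e‖ = 1 := by simp [he]
      have h5 : ‖t • e‖^2 = t^2 := by
        rw [norm_smul, hne]; rw [mul_one, Real.norm_eq_abs, sq_abs]
      rw [h5, real_inner_smul_right] at hmo
      have h6 : ⟪gradient f (x + t • e) - gradient f x, e⟫
          = ⟪e, gradient f (x + t • e) - gradient f x⟫ := real_inner_comm _ _
      rw [h6] at hmo
      have ht0 : (0:ℝ) < t := ht.1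
      simp only [zero_smul, add_zero, sub_self, inner_zero_right, sub_zero]
      rw [le_div_iff₀ ht0]
      nlinarith [hmo]
    have heq : dd i = ⟪e, fderiv ℝ (gradient f) x e⟫ := real_inner_comm _ _
    rw [heq]; exact hkey
  have hdpos : ∀ i, 0 < dd i := fun i => lt_of_lt_of_le hm (hdm i)
  have hdne : ∀ i, dd i ≠ 0 := fun i => ne_of_gt (hdpos i)
  -- the Hessian is diagonal by separability
  have hgcomp : ∀ (z : EuclideanSpace ℝ (Fin n)) i,
      gradient f z i = fderiv ℝ f z (EuclideanSpace.single i (1:ℝ)) := by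
    intro z i
    rw [(hdiff z).hasGradientAt.hasFDerivAt.fderiv, InnerProductSpace.toDual_apply_apply]
    rw [EuclideanSpace.inner_single_right]
    simp
  have P : ∀ (z w : EuclideanSpace ℝ (Fin n)) i, z i = w i →
      gradient f z i = gradient f w i := by
    intro z w i hzw
    set e : EuclideanSpace ℝ (Fin n) := EuclideanSpace.single i (1:ℝ) with he
    have hconst : ∀ t : ℝ, f (z + t • e) = f (w + t • e) + (f z - f w) := by
      intro t
      have h1 : f (z + t • e) - f (w + t • e) = f z - f w := by
        rw [hsep (z + t • e), hsep (w + t • e), hsep z, hsep w,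
          ← Finset.sum_sub_distrib, ← Finset.sum_sub_distrib]
        refine Finset.sum_congr rfl (fun j _ => ?_)
        have hz : (z + t • e) j = z j + t * (if j = i then 1 else 0) := by
          simp [he, PiLp.add_apply, PiLp.smul_apply, EuclideanSpace.single_apply]
        have hw : (w + t • e) j = w j + t * (if j = i then 1 else 0) := by
          simp [he, PiLp.add_apply, PiLp.smul_apply, EuclideanSpace.single_apply]
        rw [hz, hw]
        by_cases hji : j = i
        · subst hji; simp [hzw]
        · simp [hji]
      linarith [h1]
    have hz : HasDerivAt (fun t : ℝ => f (z + t • e)) (fderiv ℝ f z e) 0 :=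
      aux_dir z e (hdiff z)
    have hw : HasDerivAt (fun t : ℝ => f (z + t • e)) (fderiv ℝ f w e) 0 := by
      have hw0 : HasDerivAt (fun t : ℝ => f (w + t • e) + (f z - f w))
          (fderiv ℝ f w e) 0 := (aux_dir w e (hdiff w)).add_const _
      exact hw0.congr_of_eventuallyEq (by filter_upwards with t; rw [hconst t])
    rw [hgcomp z i, hgcomp w i, ← he]
    exact hz.unique hw
  have hoff : ∀ i j : Fin n, j ≠ i →
      (fderiv ℝ (gradient f) x (EuclideanSpace.single j (1:ℝ))) i = 0 := by
    intro i j hji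
    set ej : EuclideanSpace ℝ (Fin n) := EuclideanSpace.single j (1:ℝ) with hej
    have hc : HasDerivAt (fun t : ℝ => gradient f (x + t • ej))
        (fderiv ℝ (gradient f) x ej) 0 := aux_dir x ej (hgd x)
    have hci : HasDerivAt (fun t : ℝ => gradient f (x + t • ej) i)
        ((fderiv ℝ (gradient f) x ej) i) 0 := by
      simpa [Function.comp_def] using ((EuclideanSpace.proj i).hasFDerivAt).comp_hasDerivAt 0 hc
    have hcc : HasDerivAt (fun t : ℝ => gradient f (x + t • ej) i) 0 0 := by
      have hcf : (fun t : ℝ => gradient f (x + t • ej) i) = fun _ => gradient f x i := by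
        funext t
        refine P _ _ i ?_
        simp [hej, PiLp.add_apply, PiLp.smul_apply, EuclideanSpace.single_apply, hji.symm]
      rw [hcf]; exact hasDerivAt_const 0 _
    exact hci.unique hcc
  have hdiag : ∀ i : Fin n,
      (fderiv ℝ (gradient f) x (EuclideanSpace.single i (1:ℝ))) i = dd i := by
    intro i
    rw [hdd, hessDiag, EuclideanSpace.inner_single_right]
    simp
  have hHv : ∀ (v : EuclideanSpace ℝ (Fin n)) i,
      (fderiv ℝ (gradient f) x v) i = dd i * v i := by
    intro v i
    have hv : v = ∑ j, v j • EuclideanSpace.single j (1:ℝ) := by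
      ext k
      rw [WithLp.ofLp_sum, Finset.sum_apply]
      simp [EuclideanSpace.single_apply]
    conv_lhs => rw [hv]
    rw [map_sum]
    simp only [map_smul]
    rw [WithLp.ofLp_sum, Finset.sum_apply]
    rw [Finset.sum_eq_single i]
    · simp only [PiLp.smul_apply, smul_eq_mul]
      rw [hdiag i]; ring
    · intro j _ hji
      simp only [PiLp.smul_apply, smul_eq_mul]
      rw [hoff i j hji]; ring
    · intro h; exact absurd (Finset.mem_univ i) h
  -- Taylor estimate with Lipschitz Hessian
  have htaylor : ‖(fderiv ℝ (gradient f) x) (xstar - x) - (gradient f xstar - gradient f x)‖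
      ≤ L₂ / 2 * ‖xstar - x‖ ^ 2 := by
    set dv := xstar - x with hdv
    set Hd := fderiv ℝ (gradient f) x dv with hHd
    set G : ℝ → EuclideanSpace ℝ (Fin n) :=
      fun t => gradient f (x + t • dv) - t • Hd - gradient f x with hG
    have hG' : ∀ t : ℝ, HasDerivAt G (fderiv ℝ (gradient f) (x + t • dv) dv - Hd) t := by
      intro t
      have h1 : HasDerivAt (fun s : ℝ => x + s • dv) dv t := by
        simpa using ((hasDerivAt_id t).smul_const dv).const_add x
      have h2 : HasDerivAt (fun s : ℝ => gradient f (x + s • dv))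
          (fderiv ℝ (gradient f) (x + t • dv) dv) t :=
        ((hgd _).hasFDerivAt).comp_hasDerivAt t h1
      have h3 : HasDerivAt (fun s : ℝ => s • Hd) Hd t := by
        simpa using (hasDerivAt_id t).smul_const Hd
      simpa [hG] using (h2.sub h3).sub_const (gradient f x)
    have hB : ∀ t : ℝ, HasDerivAt (fun s : ℝ => L₂ * ‖dv‖^2 * s^2 / 2)
        (L₂ * ‖dv‖^2 * t) t := by
      intro t
      have := ((hasDerivAt_pow 2 t).const_mul (L₂ * ‖dv‖^2)).div_const 2
      simpa using this.congr_deriv (by push_cast; ring)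
    have key := image_norm_le_of_norm_deriv_right_le_deriv_boundary
      (f := G) (f' := fun t => fderiv ℝ (gradient f) (x + t • dv) dv - Hd)
      (a := 0) (b := 1)
      (fun t _ => (hG' t).continuousAt.continuousWithinAt)
      (fun t _ => (hG' t).hasDerivWithinAt)
      (by simp [hG])
      hB
      (by
        intro t ht
        have h4 := hhess (x + t • dv) x dv
        have h5 : x + t • dv - x = t • dv := by abel
        rw [h5, norm_smul] at h4
        have hnt : ‖(t:ℝ)‖ = t := by rw [Real.norm_eq_abs, abs_of_nonneg ht.1]
        rw [hnt] at h4
        calc ‖fderiv ℝ (gradient f) (x + t • dv) dv - Hd‖ ≤ L₂ * (t * ‖dv‖) * ‖dv‖ := h4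
          _ ≤ L₂ * ‖dv‖^2 * t := by ring_nf; rfl)
    have h6 := key (right_mem_Icc.2 zero_le_one)
    have h7 : G 1 = gradient f xstar - Hd - gradient f x := by
      simp [hG, hdv]
    have h9 : Hd - (gradient f xstar - gradient f x)
        = -(gradient f xstar - Hd - gradient f x) := by abel
    rw [h9, norm_neg, ← h7]
    calc ‖G 1‖ ≤ L₂ * ‖dv‖^2 * 1^2/2 := h6
      _ = L₂/2 * ‖dv‖^2 := by ring
  -- finiteness of g at relevant points
  obtain ⟨z₀, hz₀⟩ := hg_proper
  have hz₀r : g z₀ = ((g z₀).toReal : EReal) := (EReal.coe_toReal hz₀ (hg_nebot z₀)).symm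
  have hgyt : g y ≠ ⊤ := by
    intro h
    have h1 := hy z₀
    rw [h, EReal.top_add_of_ne_bot (EReal.coe_ne_bot _)] at h1
    rw [hz₀r, ← EReal.coe_add] at h1
    exact EReal.coe_ne_top _ (top_le_iff.mp h1)
  have hgst : g xstar ≠ ⊤ := by
    intro h
    have h1 := hopt z₀
    rw [h, EReal.add_top_of_ne_bot (EReal.coe_ne_bot _)] at h1
    rw [hz₀r, ← EReal.coe_add] at h1
    exact EReal.coe_ne_top _ (top_le_iff.mp h1)
  have hgyr : g y = ((g y).toReal : EReal) := (EReal.coe_toReal hgyt (hg_nebot y)).symm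
  have hgxr : g xstar = ((g xstar).toReal : EReal) :=
    (EReal.coe_toReal hgst (hg_nebot xstar)).symm
  set ry := (g y).toReal with hry
  set rs := (g xstar).toReal with hrs
  -- subgradient inequality at y from the prox property
  have S1 : ∀ z, g z ≠ ⊤ →
      (∑ i, dd i * (u i - y i) * (z i - y i)) ≤ (g z).toReal - ry := by
    intro z hz
    have hgzr : g z = ((g z).toReal : EReal) := (EReal.coe_toReal hz (hg_nebot z)).symm
    set s := (g z).toReal with hs
    have hq : ∀ t : ℝ, qnorm (Matrix.diagonal dd) ((y + t • (z - y)) - u)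
        = qnorm (Matrix.diagonal dd) (y - u)
          + 2 * t * (∑ i, dd i * (y i - u i) * (z i - y i))
          + t^2 * qnorm (Matrix.diagonal dd) (z - y) := by
      intro t
      rw [qnorm_diagonal, qnorm_diagonal, qnorm_diagonal, Finset.mul_sum, Finset.mul_sum,
        ← Finset.sum_add_distrib, ← Finset.sum_add_distrib]
      refine Finset.sum_congr rfl (fun i _ => ?_)
      have h1 : ((y + t • (z - y)) - u) i = y i + t * (z i - y i) - u i := by
        simp [PiLp.add_apply, PiLp.sub_apply, PiLp.smul_apply]
      have h2 : (y - u) i = y i - u i := by simp [PiLp.sub_apply]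
      have h3 : (z - y) i = z i - y i := by simp [PiLp.sub_apply]
      rw [h1, h2, h3]; ring
    have hqnn : 0 ≤ qnorm (Matrix.diagonal dd) (z - y) := by
      rw [qnorm_diagonal]
      refine Finset.sum_nonneg (fun i _ => ?_)
      have := hdm i
      nlinarith [sq_nonneg ((z - y) i)]
    have hmain : ∀ t : ℝ, 0 < t → t ≤ 1 →
        0 ≤ (s - ry + (∑ i, dd i * (y i - u i) * (z i - y i)))
          + t * ((1:ℝ)/2 * qnorm (Matrix.diagonal dd) (z - y)) := by
      intro t ht0 ht1
      set zt := y + t • (z - y) with hzt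
      have hcvx : g zt ≤ ((t * s + (1 - t) * ry : ℝ) : EReal) := by
        have h4 := hg_convex z y t (1 - t) (le_of_lt ht0) (by linarith) (by ring)
        have h5 : t • z + (1 - t) • y = zt := by rw [hzt]; module
        rw [h5] at h4
        rw [hgzr, hgyr] at h4
        calc g zt ≤ (t : EReal) * (s : EReal) + ((1 - t : ℝ) : EReal) * (ry : EReal) := h4
          _ = ((t * s + (1 - t) * ry : ℝ) : EReal) := by
              rw [← EReal.coe_mul, ← EReal.coe_mul, ← EReal.coe_add]
      have h6 := hy zt
      rw [hgyr] at h6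
      have h7 : g zt + (((1:ℝ)/2 * qnorm (Matrix.diagonal dd) (zt - u) : ℝ) : EReal)
          ≤ ((t * s + (1 - t) * ry
            + (1:ℝ)/2 * qnorm (Matrix.diagonal dd) (zt - u) : ℝ) : EReal) := by
        rw [EReal.coe_add]
        exact add_le_add_left hcvx _
      have h8 := le_trans h6 h7
      rw [← EReal.coe_add, EReal.coe_le_coe_iff] at h8
      rw [hq t] at h8
      nlinarith [h8]
    have hnn := aux_nonneg (by positivity) hmain
    have hexp : ∑ i, dd i * (u i - y i) * (z i - y i)
        = - ∑ i, dd i * (y i - u i) * (z i - y i) := by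
      rw [← Finset.sum_neg_distrib]
      exact Finset.sum_congr rfl (fun i _ => by ring)
    rw [hexp]
    linarith
  -- subgradient inequality at xstar from global optimality
  have S2 : ∀ z, g z ≠ ⊤ →
      ⟪-(gradient f xstar), z - xstar⟫ ≤ (g z).toReal - rs := by
    intro z hz
    have hgzr : g z = ((g z).toReal : EReal) := (EReal.coe_toReal hz (hg_nebot z)).symm
    set s := (g z).toReal with hs
    have hslope : rs - s ≤ fderiv ℝ f xstar (z - xstar) := by
      refine aux_ge_of_slope (aux_dir xstar (z - xstar) (hdiff xstar)) ?_
      filter_upwards [aux_small] with t ht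
      set zt := xstar + t • (z - xstar) with hzt
      have hcvx : g zt ≤ ((t * s + (1 - t) * rs : ℝ) : EReal) := by
        have h4 := hg_convex z xstar t (1 - t) (le_of_lt ht.1) (by linarith [ht.2]) (by ring)
        have h5 : t • z + (1 - t) • xstar = zt := by rw [hzt]; module
        rw [h5, hgzr, hgxr] at h4
        calc g zt ≤ (t : EReal) * (s : EReal) + ((1 - t : ℝ) : EReal) * (rs : EReal) := h4
          _ = ((t * s + (1 - t) * rs : ℝ) : EReal) := by
              rw [← EReal.coe_mul, ← EReal.coe_mul, ← EReal.coe_add]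
      have h6 := hopt zt
      rw [hgxr] at h6
      have h7 : (f zt : EReal) + g zt ≤ ((f zt + (t * s + (1 - t) * rs) : ℝ) : EReal) := by
        rw [EReal.coe_add]
        exact add_le_add_right hcvx _
      have h8 := le_trans h6 h7
      rw [← EReal.coe_add, EReal.coe_le_coe_iff] at h8
      have ht0 : (0:ℝ) < t := ht.1
      have h9 : (0:ℝ) • (z - xstar) = 0 := zero_smul _ _
      rw [h9, add_zero, sub_zero]
      rw [le_div_iff₀ ht0]
      nlinarith [h8]
    have hgi : fderiv ℝ f xstar (z - xstar) = ⟪gradient f xstar, z - xstar⟫ := by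
      rw [(hdiff xstar).hasGradientAt.hasFDerivAt.fderiv, InnerProductSpace.toDual_apply_apply]
    rw [inner_neg_left]
    rw [hgi] at hslope
    linarith
  -- coordinates of u
  have hDinv : (Matrix.diagonal dd)⁻¹ = Matrix.diagonal (fun i => (dd i)⁻¹) := by
    apply Matrix.inv_eq_right_inv
    rw [Matrix.diagonal_mul_diagonal]
    have hfun : (fun i => dd i * (dd i)⁻¹) = fun _ => (1:ℝ) :=
      funext fun i => mul_inv_cancel₀ (hdne i)
    rw [hfun, Matrix.diagonal_one]
  have hu_coord : ∀ i, u i = x i - (dd i)⁻¹ * gradient f x i := by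
    intro i
    rw [hudef]
    have h1 : (x - toE ((Matrix.diagonal dd)⁻¹.mulVec fun i => gradient f x i)) i
        = x i - toE ((Matrix.diagonal dd)⁻¹.mulVec fun i => gradient f x i) i := by
      simp [PiLp.sub_apply]
    rw [h1]
    have h2 : toE ((Matrix.diagonal dd)⁻¹.mulVec fun i => gradient f x i) i
        = (dd i)⁻¹ * gradient f x i := by
      show ((Matrix.diagonal dd)⁻¹.mulVec fun i => gradient f x i) i = _
      rw [hDinv, Matrix.mulVec_diagonal]
    rw [h2]
  -- combine the two subgradient inequalities
  have hA1 := S1 xstar hgst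
  have hA2 := S2 y hgyt
  have hA2' : - ∑ i, gradient f xstar i * (y i - xstar i) ≤ ry - rs := by
    have h1 : ⟪-(gradient f xstar), y - xstar⟫
        = - ∑ i, gradient f xstar i * (y i - xstar i) := by
      rw [hinner]
      rw [← Finset.sum_neg_distrib]
      refine Finset.sum_congr rfl (fun i _ => ?_)
      simp [PiLp.neg_apply, PiLp.sub_apply]
    rw [h1] at hA2
    exact hA2
  have hcomb : ∑ i, (dd i * (u i - y i) * (xstar i - y i)
      - gradient f xstar i * (y i - xstar i)) ≤ 0 := by
    rw [Finset.sum_sub_distrib]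
    linarith [hA1, hA2']
  -- key inequality : qnorm of y - xstar bounded by a linear form
  have KEY : ∑ i, dd i * (y i - xstar i) * (y i - xstar i)
      ≤ ∑ i, (dd i * (x i - xstar i) - gradient f x i + gradient f xstar i)
          * (y i - xstar i) := by
    rw [← sub_nonneg, ← Finset.sum_sub_distrib]
    have hEq : ∀ i ∈ Finset.univ,
        (dd i * (x i - xstar i) - gradient f x i + gradient f xstar i) * (y i - xstar i)
          - dd i * (y i - xstar i) * (y i - xstar i)
        = -(dd i * (u i - y i) * (xstar i - y i)
            - gradient f xstar i * (y i - xstar i)) := by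
      intro i _
      rw [hu_coord i]
      have h := hdne i
      field_simp
      ring
    rw [Finset.sum_congr rfl hEq, Finset.sum_neg_distrib]
    linarith [hcomb]
  -- lower bound by m times the squared norm
  have h_lhs : m * ‖y - xstar‖^2 ≤ ∑ i, dd i * (y i - xstar i) * (y i - xstar i) := by
    have hns : ‖y - xstar‖^2 = ∑ i, (y i - xstar i) * (y i - xstar i) := by
      rw [← real_inner_self_eq_norm_sq, hinner]
      refine Finset.sum_congr rfl (fun i _ => ?_)
      simp [PiLp.sub_apply]
    rw [hns, Finset.mul_sum]
    refine Finset.sum_le_sum (fun i _ => ?_)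
    have := hdm i
    nlinarith [sq_nonneg (y i - xstar i)]
  -- identify the linear form with an inner product
  set E : EuclideanSpace ℝ (Fin n) :=
    fderiv ℝ (gradient f) x (x - xstar) - (gradient f x - gradient f xstar) with hE
  have h_rhs : ∑ i, (dd i * (x i - xstar i) - gradient f x i + gradient f xstar i)
      * (y i - xstar i) = ⟪E, y - xstar⟫ := by
    rw [hinner]
    refine Finset.sum_congr rfl (fun i _ => ?_)
    have h1 : E i = fderiv ℝ (gradient f) x (x - xstar) i
        - (gradient f x i - gradient f xstar i) := by
      simp [hE, PiLp.sub_apply]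
    have h2 : fderiv ℝ (gradient f) x (x - xstar) i = dd i * (x i - xstar i) := by
      rw [hHv]
      simp [PiLp.sub_apply]
    have h3 : (y - xstar) i = y i - xstar i := by simp [PiLp.sub_apply]
    rw [h1, h2, h3]; ring
  -- norm bound on E via the Taylor estimate
  have hEnorm : ‖E‖ ≤ L₂ / 2 * ‖x - xstar‖ ^ 2 := by
    have h1 : E = -((fderiv ℝ (gradient f) x) (xstar - x)
        - (gradient f xstar - gradient f x)) := by
      rw [hE]
      rw [show x - xstar = -(xstar - x) by abel, map_neg]
      abel
    rw [h1, norm_neg]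
    calc ‖(fderiv ℝ (gradient f) x) (xstar - x) - (gradient f xstar - gradient f x)‖
        ≤ L₂ / 2 * ‖xstar - x‖ ^ 2 := htaylor
      _ = L₂ / 2 * ‖x - xstar‖ ^ 2 := by rw [norm_sub_rev]
  -- Cauchy–Schwarz and conclude
  have hcs : ⟪E, y - xstar⟫ ≤ ‖E‖ * ‖y - xstar‖ := real_inner_le_norm E (y - xstar)
  have hchain : m * ‖y - xstar‖^2 ≤ (L₂ / 2 * ‖x - xstar‖ ^ 2) * ‖y - xstar‖ := by
    calc m * ‖y - xstar‖^2 ≤ ∑ i, dd i * (y i - xstar i) * (y i - xstar i) := h_lhs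
      _ ≤ ∑ i, (dd i * (x i - xstar i) - gradient f x i + gradient f xstar i)
          * (y i - xstar i) := KEY
      _ = ⟪E, y - xstar⟫ := h_rhs
      _ ≤ ‖E‖ * ‖y - xstar‖ := hcs
      _ ≤ (L₂ / 2 * ‖x - xstar‖ ^ 2) * ‖y - xstar‖ :=
          mul_le_mul_of_nonneg_right hEnorm (norm_nonneg _)
  have hL2 : 0 ≤ L₂ * ‖x - xstar‖ * ‖x - xstar‖ :=
    le_trans (norm_nonneg _) (hhess x xstar (x - xstar))
  rcases eq_or_lt_of_le (norm_nonneg (y - xstar)) with h0 | h0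
  · rw [← h0]
    rw [div_mul_eq_mul_div]
    apply div_nonneg _ (by linarith)
    nlinarith [hL2]
  · rw [div_mul_eq_mul_div, le_div_iff₀ (by linarith : (0:ℝ) < 2 * m)]
    nlinarith [hchain, h0]
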